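/- arXiv:2210.12036 — 3 statements merged into one kernel-verified Lean document; each statement's English description precedes it below -/
import Mathlib

section
/- If two segments p1p3 and p2p4 in the plane cross at a point px, and a point q lies strictly inside the triangle p1 px p4, then the line through q and p1 strictly separates the segments p1p4 and p2p3 except for passing through the endpoint p1 (i.e., the open segments p1p4 \ {p1} and p2p3 lie strictly on opposite sides of the line qp1). -/
open scoped Classical

noncomputable section

/-- The plane. -/
abbrev Pl := ℝ × ℝ
/-- A segment, as an ordered pair of endpoints. -/
abbrev Seg := Pl × Pl

/-- The set of points of a segment. -/
def segSet (s : Seg) : Set Pl := segment ℝ s.1 s.2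

/-- Two segments cross: they intersect in exactly one point which is
not an endpoint of either. -/
def Cross (s t : Seg) : Prop :=
  ∃ x : Pl, segSet s ∩ segSet t = {x} ∧ x ≠ s.1 ∧ x ≠ s.2 ∧ x ≠ t.1 ∧ x ≠ t.2

/-- The line through two points. -/
def lineThrough (p q : Pl) : Set Pl := {x | Collinear ℝ ({p, q, x} : Set Pl)}

/-- A line crosses a segment: they intersect in exactly one point which is
not an endpoint of the segment. -/
def LineCross (l : Set Pl) (s : Seg) : Prop :=
  ∃ x : Pl, l ∩ segSet s = {x} ∧ x ≠ s.1 ∧ x ≠ s.2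

/-- Signed side of the line through `a` and `b` on which `x` lies. -/
def sideVal (a b x : Pl) : ℝ :=
  (b.1 - a.1) * (x.2 - a.2) - (b.2 - a.2) * (x.1 - a.1)

/-- General position: no three (distinct) points of `S` are collinear. -/
def GenPos (S : Set Pl) : Prop :=
  ∀ a ∈ S, ∀ b ∈ S, ∀ c ∈ S, a ≠ b → a ≠ c → b ≠ c → ¬ Collinear ℝ ({a, b, c} : Set Pl)

/-- Strictly convex position. -/
def ConvexPos (S : Set Pl) : Prop := ∀ p ∈ S, p ∉ convexHull ℝ (S \ {p})

/-- A set of segments is a matching: no degenerate segment and all endpoints distinct. -/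
def IsMatching (M : Finset Seg) : Prop :=
  (∀ s ∈ M, s.1 ≠ s.2) ∧
  ∀ s ∈ M, ∀ t ∈ M, s ≠ t → ({s.1, s.2} : Set Pl) ∩ {t.1, t.2} = ∅

/-- A perfect matching on the point set `P`. -/
def IsPM (P : Finset Pl) (M : Finset Seg) : Prop :=
  IsMatching M ∧ (∀ s ∈ M, s.1 ∈ P ∧ s.2 ∈ P) ∧
  ∀ p ∈ P, ∃ s ∈ M, p = s.1 ∨ p = s.2

/-- Number of (unordered) crossing pairs of segments of `M`. -/
def phiX (M : Finset Seg) : ℕ :=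
  Set.ncard {z : Sym2 Seg | ∃ u t : Seg, z = s(u, t) ∧ u ∈ M ∧ t ∈ M ∧ Cross u t}

/-- Number of segments of `M` crossed by the line `l`. -/
def phiLine (l : Set Pl) (M : Finset Seg) : ℕ :=
  Set.ncard {s : Seg | s ∈ M ∧ LineCross l s}

/-- All lines through two points of `P`. -/
def linesOf (P : Finset Pl) : Set (Set Pl) :=
  {l | ∃ p ∈ P, ∃ q ∈ P, p ≠ q ∧ l = lineThrough p q}

/-- The line potential with respect to a set of lines `L`. -/
def phiL (L : Set (Set Pl)) (M : Finset Seg) : ℕ := ∑ᶠ l ∈ L, phiLine l M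

/-- A flip in the matching version: replace a crossing pair by one of the two
non-crossing pairs on the same four endpoints. -/
def IsFlip (M M' : Finset Seg) : Prop :=
  ∃ p1 p2 p3 p4 : Pl,
    Cross (p1, p3) (p2, p4) ∧ (p1, p3) ∈ M ∧ (p2, p4) ∈ M ∧
    ((¬ Cross (p1, p4) (p2, p3) ∧ M' = (M \ {(p1, p3), (p2, p4)}) ∪ {(p1, p4), (p2, p3)}) ∨
     (¬ Cross (p1, p2) (p3, p4) ∧ M' = (M \ {(p1, p3), (p2, p4)}) ∪ {(p1, p2), (p3, p4)}))

/-- `t1, t2` reconnect the four endpoints of `s1, s2` forming a 4-cycle. -/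
def Rewires (s1 s2 t1 t2 : Seg) : Prop :=
  ∃ a b c d : Pl, ({s1.1, s1.2} : Set Pl) = {a, b} ∧ ({s2.1, s2.2} : Set Pl) = {c, d} ∧
    ((({t1.1, t1.2} : Set Pl) = {a, c} ∧ ({t2.1, t2.2} : Set Pl) = {b, d}) ∨
     (({t1.1, t1.2} : Set Pl) = {a, d} ∧ ({t2.1, t2.2} : Set Pl) = {b, c}))

/-- A flip in the multigraph (multiset) version. -/
def IsFlipMS (M M' : Multiset Seg) : Prop :=
  ∃ p1 p2 p3 p4 : Pl, Cross (p1, p3) (p2, p4) ∧ (p1, p3) ∈ M ∧ (p2, p4) ∈ M ∧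
    ∃ t1 t2 : Seg, Rewires (p1, p3) (p2, p4) t1 t2 ∧ ¬ Cross t1 t2 ∧
      M' = t1 ::ₘ t2 ::ₘ ((M.erase (p1, p3)).erase (p2, p4))

/-- A red-blue perfect matching: first coordinates red, second coordinates blue. -/
def IsRBPM (R B : Finset Pl) (M : Finset Seg) : Prop :=
  IsMatching M ∧ (∀ s ∈ M, s.1 ∈ R ∧ s.2 ∈ B) ∧
  (∀ p ∈ R, ∃ s ∈ M, p = s.1) ∧ (∀ p ∈ B, ∃ s ∈ M, p = s.2)

/-- A flip in the red-blue matching version (the replacement pair is forced). -/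
def IsRBFlip (M M' : Finset Seg) : Prop :=
  ∃ r1 b1 r2 b2 : Pl, Cross (r1, b1) (r2, b2) ∧ (r1, b1) ∈ M ∧ (r2, b2) ∈ M ∧
    ¬ Cross (r1, b2) (r2, b1) ∧ M' = (M \ {(r1, b1), (r2, b2)}) ∪ {(r1, b2), (r2, b1)}

/-- `T` is (the edge set of) a tour on `N` points. -/
def IsTour (T : Finset Seg) (N : ℕ) : Prop :=
  3 ≤ N ∧ ∃ v : Fin N → Pl, Function.Injective v ∧
    T = Finset.image (fun i : Fin N => (v i, v (finRotate N i))) Finset.univ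

/-- A flip in the TSP version: remove two crossing tour edges and reconnect the
four endpoints. -/
def IsTSPFlip (T T' : Finset Seg) : Prop :=
  ∃ s1 s2 t1 t2 : Seg, Cross s1 s2 ∧ s1 ∈ T ∧ s2 ∈ T ∧ Rewires s1 s2 t1 t2 ∧
    T' = (T \ {s1, s2}) ∪ {t1, t2}

/-- `a` and `b` are consecutive points on the convex-hull boundary of `Q`. -/
def HullEdge (Q : Finset Pl) (a b : Pl) : Prop :=
  a ∈ Q ∧ b ∈ Q ∧ a ≠ b ∧
  ((∀ c ∈ Q, c ≠ a → c ≠ b → 0 < sideVal a b c) ∨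
   (∀ c ∈ Q, c ≠ a → c ≠ b → sideVal a b c < 0))

/-- The line-potential drop of a flip, independent of the ambient matching. -/
def flipDrop (P : Finset Pl) (p1 p2 p3 p4 : Pl) : ℤ :=
  ∑ᶠ l ∈ linesOf P,
    ((phiLine l {(p1, p3), (p2, p4)} : ℤ) - (phiLine l {(p1, p4), (p2, p3)} : ℤ))

section Aux

lemma sideVal_eq_zero_of_collinear {a b c : Pl}
    (h : Collinear ℝ ({a, b, c} : Set Pl)) : sideVal a b c = 0 := by
  rw [collinear_iff_of_mem (Set.mem_insert a _)] at h
  obtain ⟨v, hv⟩ := h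
  obtain ⟨rb, hb⟩ := hv b (by simp)
  obtain ⟨rc, hc⟩ := hv c (by simp)
  have hb1 : b.1 = rb * v.1 + a.1 := by rw [hb]; simp
  have hb2 : b.2 = rb * v.2 + a.2 := by rw [hb]; simp
  have hc1 : c.1 = rc * v.1 + a.1 := by rw [hc]; simp
  have hc2 : c.2 = rc * v.2 + a.2 := by rw [hc]; simp
  simp only [sideVal]
  rw [hb1, hb2, hc1, hc2]; ring

lemma collinear_of_sideVal_eq_zero {a b c : Pl}
    (h : sideVal a b c = 0) : Collinear ℝ ({a, b, c} : Set Pl) := by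
  by_cases hab : b = a
  · subst hab
    rw [Set.insert_comm, Set.insert_idem]
    exact collinear_pair ℝ _ _
  · rw [collinear_iff_of_mem (Set.mem_insert a _)]
    refine ⟨b - a, ?_⟩
    rintro p (rfl | rfl | rfl)
    · exact ⟨0, by simp⟩
    · exact ⟨1, by simp⟩
    · simp only [sideVal] at h
      by_cases h1 : b.1 - a.1 ≠ 0
      · refine ⟨(p.1 - a.1) / (b.1 - a.1), ?_⟩
        have e1 : ((p.1 - a.1) / (b.1 - a.1)) • (b - a) + a = p := by
          apply Prod.ext
          · simp; field_simp; ring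
          · simp only [Prod.fst_add, Prod.snd_add, Prod.smul_fst, Prod.smul_snd,
              Prod.fst_sub, Prod.snd_sub, smul_eq_mul]
            field_simp
            nlinarith [h]
        simp [e1]
      · push_neg at h1
        have h2 : b.2 - a.2 ≠ 0 := by
          intro h2
          apply hab
          apply Prod.ext <;> [linarith; linarith]
        refine ⟨(p.2 - a.2) / (b.2 - a.2), ?_⟩
        have e1 : ((p.2 - a.2) / (b.2 - a.2)) • (b - a) + a = p := by
          have hp1 : p.1 = a.1 := by
            have : (b.2 - a.2) * (p.1 - a.1) = 0 := by
              linear_combination (p.2 - a.2) * h1 - h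
            rcases mul_eq_zero.mp this with h' | h'
            · exact absurd h' h2
            · linarith
          apply Prod.ext
          · simp only [Prod.fst_add, Prod.smul_fst, Prod.fst_sub, smul_eq_mul]
            rw [h1, hp1]; ring
          · simp only [Prod.snd_add, Prod.smul_snd, Prod.snd_sub, smul_eq_mul]
            field_simp; ring
        simp [e1]

lemma sideVal_affine (a b u v : Pl) (s t : ℝ) (h : s + t = 1) :
    sideVal a b (s • u + t • v) = s * sideVal a b u + t * sideVal a b v := by
  have ht : t = 1 - s := by linarith
  subst ht
  simp only [sideVal, Prod.fst_add, Prod.snd_add, Prod.smul_fst, Prod.smul_snd, smul_eq_mul]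
  ring

lemma neg_of_mul_eq_neg {c x y : ℝ} (h : c * x = y) (hc : 0 < c) (hy : y < 0) : x < 0 := by
  by_contra hx; push_neg at hx; nlinarith

lemma pos_of_mul_eq_pos {c x y : ℝ} (h : c * x = y) (hc : 0 < c) (hy : 0 < y) : 0 < x := by
  by_contra hx; push_neg at hx; nlinarith

lemma combo_neg {A B va vb : ℝ} (hA : A < 0) (hB : B < 0) (hva : 0 ≤ va)
    (hvb : 0 ≤ vb) (h : va + vb = 1) : va * A + vb * B < 0 := by
  rcases le_or_gt va (1 / 2) with h1 | h1
  · have hvb' : (1 / 2 : ℝ) ≤ vb := by linarith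
    nlinarith [mul_nonpos_of_nonneg_of_nonpos hva hA.le]
  · nlinarith [mul_nonpos_of_nonneg_of_nonpos hvb hB.le]

lemma seg_signs (f : Pl → ℝ)
    (hf : ∀ (u v : Pl) (s t : ℝ), s + t = 1 → f (s • u + t • v) = s * f u + t * f v)
    (p1 p2 p3 p4 : Pl) (hp1 : f p1 = 0) (h4 : 0 < f p4) (h2 : f p2 < 0) (h3 : f p3 < 0) :
    (∀ x ∈ segment ℝ p1 p4, x ≠ p1 → 0 < f x) ∧ (∀ y ∈ segment ℝ p2 p3, f y < 0) := by
  constructor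
  · intro x hx hxne
    obtain ⟨ua, ub, hua, hub, huab, rfl⟩ := hx
    rw [hf _ _ _ _ huab, hp1]
    have hub0 : 0 < ub := by
      rcases hub.lt_or_eq with h | h
      · exact h
      · exfalso; apply hxne
        have hua1 : ua = 1 := by linarith
        rw [hua1, ← h]; simp
    nlinarith [mul_pos hub0 h4]
  · intro y hy
    obtain ⟨va, vb, hva, hvb, hvab, rfl⟩ := hy
    rw [hf _ _ _ _ hvab]
    exact combo_neg h2 h3 hva hvb hvab

end Aux

set_option maxHeartbeats 1600000 in
/-- if segments `p1p3` and `p2p4` cross at `px` and `q` lies strictly inside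
triangle `p1 px p4`, then the line `q p1` strictly separates `p1p4 \ {p1}` from `p2p3`. -/
theorem stmt0 (p1 p2 p3 p4 q px : Pl)
    (hgp : GenPos ({p1, p2, p3, p4, q} : Set Pl))
    (hcross : segSet (p1, p3) ∩ segSet (p2, p4) = {px} ∧
      px ≠ p1 ∧ px ≠ p3 ∧ px ≠ p2 ∧ px ≠ p4)
    (hq : q ∈ interior (convexHull ℝ ({p1, px, p4} : Set Pl))) :
    ((∀ x ∈ segment ℝ p1 p4, x ≠ p1 → 0 < sideVal q p1 x) ∧
      (∀ y ∈ segment ℝ p2 p3, sideVal q p1 y < 0)) ∨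
    ((∀ x ∈ segment ℝ p1 p4, x ≠ p1 → sideVal q p1 x < 0) ∧
      (∀ y ∈ segment ℝ p2 p3, 0 < sideVal q p1 y)) := by
  obtain ⟨hsing, hxp1, hxp3, hxp2, hxp4⟩ := hcross
  have hpxmem : px ∈ segSet (p1, p3) ∩ segSet (p2, p4) := by rw [hsing]; rfl
  obtain ⟨hpxA, hpxB⟩ := hpxmem
  obtain ⟨ta, tb, hta, htb, htab, hpx13⟩ := hpxA
  obtain ⟨sa, sb, hsa, hsb, hsab, hpx24⟩ := hpxB
  -- distinctness
  have h13 : p1 ≠ p3 := by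
    rintro rfl
    apply hxp1
    have h2 : px ∈ segment ℝ p1 p1 := ⟨ta, tb, hta, htb, htab, hpx13⟩
    rw [segment_same] at h2
    exact Set.mem_singleton_iff.mp h2
  have h14 : p1 ≠ p4 := by
    rintro rfl
    apply hxp1
    have h2 : p1 ∈ segSet (p1, p3) ∩ segSet (p2, p1) :=
      ⟨left_mem_segment ℝ p1 p3, right_mem_segment ℝ p2 p1⟩
    rw [hsing] at h2
    exact (Set.mem_singleton_iff.mp h2).symm
  have h34 : p3 ≠ p4 := by
    rintro rfl
    apply hxp3
    have h2 : p3 ∈ segSet (p1, p3) ∩ segSet (p2, p3) :=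
      ⟨right_mem_segment ℝ p1 p3, right_mem_segment ℝ p2 p3⟩
    rw [hsing] at h2
    exact (Set.mem_singleton_iff.mp h2).symm
  -- component equations for px
  have hta' : ta = 1 - tb := by linarith
  subst hta'
  have hsa' : sa = 1 - sb := by linarith
  subst hsa'
  have hpxc1 : px.1 = (1 - tb) * p1.1 + tb * p3.1 := by
    rw [← hpx13]; simp
  have hpxc2 : px.2 = (1 - tb) * p1.2 + tb * p3.2 := by
    rw [← hpx13]; simp
  have hpxd1 : px.1 = (1 - sb) * p2.1 + sb * p4.1 := by
    rw [← hpx24]; simp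
  have hpxd2 : px.2 = (1 - sb) * p2.2 + sb * p4.2 := by
    rw [← hpx24]; simp
  have htb0 : 0 < tb := by
    rcases htb.lt_or_eq with h | h
    · exact h
    · exfalso; apply hxp1
      apply Prod.ext
      · rw [hpxc1, ← h]; ring
      · rw [hpxc2, ← h]; ring
  have hsb1 : sb < 1 := by
    have hsble : sb ≤ 1 := by linarith
    rcases hsble.lt_or_eq with h | h
    · exact h
    · exfalso; apply hxp4
      apply Prod.ext
      · rw [hpxd1, h]; ring
      · rw [hpxd2, h]; ring
  -- p1, px, p4 are not collinear
  have hS : sideVal p1 px p4 ≠ 0 := by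
    intro h0
    have hkey : sideVal p1 px p4 = tb * sideVal p1 p3 p4 := by
      simp only [sideVal]; rw [hpxc1, hpxc2]; ring
    have h1 : sideVal p1 p3 p4 = 0 := by
      rw [hkey] at h0
      rcases mul_eq_zero.mp h0 with h | h
      · exact absurd h htb0.ne'
      · exact h
    exact hgp p1 (by simp) p3 (by simp) p4 (by simp) h13 h14 h34
      (collinear_of_sideVal_eq_zero h1)
  have hnc : ¬ Collinear ℝ ({p1, px, p4} : Set Pl) :=
    fun h => hS (sideVal_eq_zero_of_collinear h)
  -- barycentric coordinates of q
  have hA : AffineIndependent ℝ ![p1, px, p4] :=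
    affineIndependent_iff_not_collinear_set.mpr hnc
  have htot : affineSpan ℝ (Set.range ![p1, px, p4]) = ⊤ := by
    rw [hA.affineSpan_eq_top_iff_card_eq_finrank_add_one]
    simp
  let B : AffineBasis (Fin 3) ℝ Pl := ⟨![p1, px, p4], hA, htot⟩
  have hBcoe : ⇑B = ![p1, px, p4] := rfl
  have hrange : Set.range ⇑B = ({p1, px, p4} : Set Pl) := by
    rw [hBcoe]
    ext z
    simp only [Set.mem_insert_iff, Set.mem_singleton_iff]
    constructor
    · rintro ⟨i, rfl⟩
      fin_cases i <;> simp
    · rintro (rfl | rfl | rfl)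
      exacts [⟨0, rfl⟩, ⟨1, rfl⟩, ⟨2, rfl⟩]
  have hqpos : ∀ i, 0 < B.coord i q := by
    have hic := B.interior_convexHull
    rw [hrange] at hic
    rw [hic] at hq
    exact hq
  have hsum1 : B.coord 0 q + B.coord 1 q + B.coord 2 q = 1 := by
    have h := B.sum_coord_apply_eq_one q
    rwa [Fin.sum_univ_three] at h
  have hcomb : B.coord 0 q • p1 + B.coord 1 q • px + B.coord 2 q • p4 = q := by
    have h := B.linear_combination_coord_eq_self q
    rw [Fin.sum_univ_three] at h
    simpa [hBcoe] using h
  obtain ⟨α, β, γ, hαp, hβp, hγp, hsum, hcombo⟩ :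
      ∃ α β γ : ℝ, 0 < α ∧ 0 < β ∧ 0 < γ ∧ α + β + γ = 1 ∧
        α • p1 + β • px + γ • p4 = q :=
    ⟨_, _, _, hqpos 0, hqpos 1, hqpos 2, hsum1, hcomb⟩
  have hα' : α = 1 - β - γ := by linarith
  subst hα'
  have hqc1 : q.1 = (1 - β - γ) * p1.1 + β * px.1 + γ * p4.1 := by
    rw [← hcombo]; simp
  have hqc2 : q.2 = (1 - β - γ) * p1.2 + β * px.2 + γ * p4.2 := by
    rw [← hcombo]; simp
  -- key sideVal computations
  have hv4 : sideVal q p1 p4 = -(β * sideVal p1 px p4) := by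
    simp only [sideVal]; rw [hqc1, hqc2]; ring
  have hvx : sideVal q p1 px = γ * sideVal p1 px p4 := by
    simp only [sideVal]; rw [hqc1, hqc2]; ring
  have hv3 : tb * sideVal q p1 p3 = γ * sideVal p1 px p4 := by
    rw [← hvx]
    simp only [sideVal]
    rw [hpxc1, hpxc2]
    ring
  have hv2 : (1 - sb) * sideVal q p1 p2 = (γ + sb * β) * sideVal p1 px p4 := by
    have e : (1 - sb) * sideVal q p1 p2 =
        sideVal q p1 px - sb * sideVal q p1 p4 := by
      simp only [sideVal]
      rw [hpxd1, hpxd2]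
      ring
    rw [e, hvx, hv4]; ring
  have hzero : sideVal q p1 p1 = 0 := by simp only [sideVal]; ring
  have hco : 0 < γ + sb * β := by nlinarith
  have hsb0 : 0 < 1 - sb := by linarith
  have haff : ∀ (u v : Pl) (s t : ℝ), s + t = 1 →
      sideVal q p1 (s • u + t • v) = s * sideVal q p1 u + t * sideVal q p1 v :=
    fun u v s t h => sideVal_affine q p1 u v s t h
  rcases hS.lt_or_gt with hSn | hSp
  · -- sideVal p1 px p4 < 0 : f p4 > 0, f p2 < 0, f p3 < 0
    left
    refine seg_signs (sideVal q p1) haff p1 p2 p3 p4 hzero ?_ ?_ ?_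
    · rw [hv4]; nlinarith
    · exact neg_of_mul_eq_neg hv2 hsb0 (mul_neg_of_pos_of_neg hco hSn)
    · exact neg_of_mul_eq_neg hv3 htb0 (mul_neg_of_pos_of_neg hγp hSn)
  · -- sideVal p1 px p4 > 0 : f p4 < 0, f p2 > 0, f p3 > 0
    right
    have hg4 : (0:ℝ) < -sideVal q p1 p4 := by rw [hv4]; nlinarith
    have hg2 : -sideVal q p1 p2 < 0 := by
      rw [neg_lt_zero]
      exact pos_of_mul_eq_pos hv2 hsb0 (mul_pos hco hSp)
    have hg3 : -sideVal q p1 p3 < 0 := by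
      rw [neg_lt_zero]
      exact pos_of_mul_eq_pos hv3 htb0 (mul_pos hγp hSp)
    have hmain := seg_signs (fun x => -sideVal q p1 x)
      (fun u v s t h => by
        show -sideVal q p1 (s • u + t • v) = _
        rw [haff u v s t h]; ring)
      p1 p2 p3 p4 (by show -sideVal q p1 p1 = 0; rw [hzero]; ring) hg4 hg2 hg3
    refine ⟨fun x hx hne => ?_, fun y hy => ?_⟩
    · have h : 0 < -sideVal q p1 x := hmain.1 x hx hne
      linarith
    · have h : -sideVal q p1 y < 0 := hmain.2 y hy
      linarith
end
end

section
/- Let p1p3 and p2p4 be two crossing segments in the plane, and let ℓ be any line avoiding all four points p1, p2, p3, p4. Then the number of segments among the new pair {p1p4, p2p3} crossed by ℓ is at most the number of segments among the old pair {p1p3, p2p4} crossed by ℓ; i.e., a flip never increases the potential Φ_ℓ of any such line. -/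
open scoped Classical

noncomputable section

lemma sideVal_combo (a b p q : Pl) (u v : ℝ) (h : u + v = 1) :
    sideVal a b (u • p + v • q) = u * sideVal a b p + v * sideVal a b q := by
  have hv : v = 1 - u := by linarith
  subst hv
  simp only [sideVal, Prod.fst_add, Prod.snd_add, Prod.smul_fst, Prod.smul_snd, smul_eq_mul]
  ring

lemma mem_line_iff (a b x : Pl) (hab : a ≠ b) :
    x ∈ lineThrough a b ↔ sideVal a b x = 0 := by
  constructor
  · intro hx
    have hx' : Collinear ℝ ({a, b, x} : Set Pl) := hx
    obtain ⟨p₀, v, hv⟩ := (collinear_iff_exists_forall_eq_smul_vadd (k := ℝ) _).mp hx'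
    obtain ⟨ra, ha⟩ := hv a (by simp)
    obtain ⟨rb, hb⟩ := hv b (by simp)
    obtain ⟨rx, hxx⟩ := hv x (by simp)
    subst ha; subst hb; subst hxx
    simp only [sideVal, vadd_eq_add, Prod.fst_add, Prod.snd_add, Prod.smul_fst,
      Prod.smul_snd, smul_eq_mul]
    ring
  · intro h
    have hab' : b.1 - a.1 ≠ 0 ∨ b.2 - a.2 ≠ 0 := by
      by_contra hc
      push_neg at hc
      exact hab (Prod.ext (by linarith [hc.1]) (by linarith [hc.2])).symm
    have key : ∃ c : ℝ, x = c • (b - a) + a := by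
      rcases hab' with h1 | h1
      · refine ⟨(x.1 - a.1) / (b.1 - a.1), ?_⟩
        have h2 : (b.1 - a.1) * (x.2 - a.2) = (b.2 - a.2) * (x.1 - a.1) := by
          simp only [sideVal] at h; linarith
        apply Prod.ext
        · simp only [Prod.fst_add, Prod.smul_fst, Prod.fst_sub, smul_eq_mul]
          field_simp
          ring
        · simp only [Prod.snd_add, Prod.smul_snd, Prod.snd_sub, smul_eq_mul]
          field_simp
          linarith [mul_comm (x.1 - a.1) (b.2 - a.2)]
      · refine ⟨(x.2 - a.2) / (b.2 - a.2), ?_⟩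
        have h2 : (b.1 - a.1) * (x.2 - a.2) = (b.2 - a.2) * (x.1 - a.1) := by
          simp only [sideVal] at h; linarith
        apply Prod.ext
        · simp only [Prod.fst_add, Prod.smul_fst, Prod.fst_sub, smul_eq_mul]
          field_simp
          linarith [mul_comm (x.2 - a.2) (b.1 - a.1)]
        · simp only [Prod.snd_add, Prod.smul_snd, Prod.snd_sub, smul_eq_mul]
          field_simp
          ring
    obtain ⟨c, hc⟩ := key
    show Collinear ℝ ({a, b, x} : Set Pl)
    apply (collinear_iff_exists_forall_eq_smul_vadd (k := ℝ) _).mpr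
    refine ⟨a, b - a, ?_⟩
    intro p hp
    rcases hp with rfl | rfl | rfl
    · exact ⟨0, by simp⟩
    · exact ⟨1, by simp [vadd_eq_add]; try abel⟩
    · exact ⟨c, by simp [vadd_eq_add, hc]⟩

lemma seg_pos (a b p q x : Pl) (hp : 0 < sideVal a b p) (hq : 0 < sideVal a b q)
    (hx : x ∈ segment ℝ p q) : 0 < sideVal a b x := by
  obtain ⟨u, v, hu, hv, huv, hx⟩ := hx
  rw [← hx, sideVal_combo _ _ _ _ _ _ huv]
  nlinarith [mul_nonneg hu hp.le, mul_nonneg hv hq.le, mul_pos hp hq]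

lemma seg_neg (a b p q x : Pl) (hp : sideVal a b p < 0) (hq : sideVal a b q < 0)
    (hx : x ∈ segment ℝ p q) : sideVal a b x < 0 := by
  obtain ⟨u, v, hu, hv, huv, hx⟩ := hx
  rw [← hx, sideVal_combo _ _ _ _ _ _ huv]
  nlinarith [mul_nonpos_of_nonneg_of_nonpos hu hp.le, mul_nonpos_of_nonneg_of_nonpos hv hq.le, mul_pos_of_neg_of_neg hp hq]

lemma lineCross_iff (a b p q : Pl) (hab : a ≠ b) (hp : sideVal a b p ≠ 0)
    (hq : sideVal a b q ≠ 0) :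
    LineCross (lineThrough a b) (p, q) ↔ sideVal a b p * sideVal a b q < 0 := by
  constructor
  · rintro ⟨x, hxeq, -, -⟩
    have hx : x ∈ lineThrough a b ∩ segSet (p, q) := by rw [hxeq]; rfl
    have hx0 : sideVal a b x = 0 := (mem_line_iff a b x hab).mp hx.1
    have hxseg : x ∈ segment ℝ p q := hx.2
    rcases lt_or_gt_of_ne (mul_ne_zero hp hq) with h | h
    · exact h
    · exfalso
      rcases mul_pos_iff.mp h with ⟨h1, h2⟩ | ⟨h1, h2⟩
      · exact absurd hx0 (seg_pos a b p q x h1 h2 hxseg).ne'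
      · exact absurd hx0 (seg_neg a b p q x h1 h2 hxseg).ne
  · intro h
    set fp := sideVal a b p with hfp
    set fq := sideVal a b q with hfq
    have hne : fp - fq ≠ 0 := by
      rcases mul_neg_iff.mp h with ⟨h1, h2⟩ | ⟨h1, h2⟩ <;> intro hc <;> nlinarith
    set t : ℝ := fp / (fp - fq) with ht
    have ht0 : 0 < t := by
      rcases mul_neg_iff.mp h with ⟨h1, h2⟩ | ⟨h1, h2⟩
      · exact div_pos h1 (by linarith)
      · rw [ht]; rw [div_pos_iff]; right; constructor <;> linarith
    have ht1 : t < 1 := by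
      rw [ht, div_lt_one_iff]
      rcases mul_neg_iff.mp h with ⟨h1, h2⟩ | ⟨h1, h2⟩
      · left; constructor <;> linarith
      · right; right; constructor <;> linarith
    set x : Pl := (1 - t) • p + t • q with hx
    have hfx : sideVal a b x = 0 := by
      rw [hx, sideVal_combo a b p q (1 - t) t (by ring), ← hfp, ← hfq, ht]
      field_simp
      ring
    have hxseg : x ∈ segment ℝ p q := ⟨1 - t, t, by linarith, ht0.le, by ring, rfl⟩
    have hpq : p ≠ q := by
      intro hc
      have hfpq : fp = fq := by rw [hfp, hfq, hc]
      rw [hfpq] at h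
      nlinarith [mul_self_nonneg fq]
    refine ⟨x, ?_, ?_, ?_⟩
    · apply Set.eq_singleton_iff_unique_mem.mpr
      refine ⟨⟨(mem_line_iff a b x hab).mpr hfx, hxseg⟩, ?_⟩
      rintro y ⟨hy1, hy2⟩
      obtain ⟨u, v, hu, hv, huv, hy⟩ := hy2
      have hy0 : sideVal a b y = 0 := (mem_line_iff a b y hab).mp hy1
      rw [← hy, sideVal_combo a b p q u v huv, ← hfp, ← hfq] at hy0
      have hv' : v = t := by
        have h' : v * (fp - fq) = fp := by linear_combination (-1 : ℝ) * hy0 + fp * huv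
        rw [ht, eq_div_iff hne]
        linear_combination h'
      rw [← hy, hx, hv', show u = 1 - t by linarith [huv, hv']]
    · show x ≠ p
      intro hc; rw [hc] at hfx; exact hp hfx
    · show x ≠ q
      intro hc; rw [hc] at hfx; exact hq hfx

set_option maxHeartbeats 2000000 in
/-- a flip never increases the potential `Φ_ℓ` of a line avoiding the four
flipped points: the number of segments among the new pair `{p1p4, p2p3}` crossed by the
line is at most the number among the old pair `{p1p3, p2p4}`. -/
theorem stmt2 (p1 p2 p3 p4 a b : Pl) (hab : a ≠ b)
    (hgp : GenPos ({p1, p2, p3, p4} : Set Pl))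
    (hcross : Cross (p1, p3) (p2, p4))
    (h1 : p1 ∉ lineThrough a b) (h2 : p2 ∉ lineThrough a b)
    (h3 : p3 ∉ lineThrough a b) (h4 : p4 ∉ lineThrough a b) :
    (if LineCross (lineThrough a b) (p1, p4) then 1 else 0) +
        (if LineCross (lineThrough a b) (p2, p3) then 1 else 0) ≤
      (if LineCross (lineThrough a b) (p1, p3) then 1 else 0) +
        (if LineCross (lineThrough a b) (p2, p4) then (1 : ℕ) else 0) := by
  have hf1 : sideVal a b p1 ≠ 0 := fun h => h1 ((mem_line_iff a b p1 hab).mpr h)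
  have hf2 : sideVal a b p2 ≠ 0 := fun h => h2 ((mem_line_iff a b p2 hab).mpr h)
  have hf3 : sideVal a b p3 ≠ 0 := fun h => h3 ((mem_line_iff a b p3 hab).mpr h)
  have hf4 : sideVal a b p4 ≠ 0 := fun h => h4 ((mem_line_iff a b p4 hab).mpr h)
  obtain ⟨x, hxeq, -, -, -, -⟩ := hcross
  have hx : x ∈ segSet (p1, p3) ∩ segSet (p2, p4) := by rw [hxeq]; rfl
  have hx13 : x ∈ segment ℝ p1 p3 := hx.1
  have hx24 : x ∈ segment ℝ p2 p4 := hx.2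
  simp only [lineCross_iff a b _ _ hab hf1 hf4, lineCross_iff a b _ _ hab hf2 hf3,
    lineCross_iff a b _ _ hab hf1 hf3, lineCross_iff a b _ _ hab hf2 hf4]
  rcases lt_or_gt_of_ne hf1 with s1 | s1 <;>
    rcases lt_or_gt_of_ne hf2 with s2 | s2 <;>
    rcases lt_or_gt_of_ne hf3 with s3 | s3 <;>
    rcases lt_or_gt_of_ne hf4 with s4 | s4 <;>
  first
    | (exfalso
       linarith [seg_pos a b p1 p3 x s1 s3 hx13, seg_neg a b p2 p4 x s2 s4 hx24])
    | (exfalso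
       linarith [seg_neg a b p1 p3 x s1 s3 hx13, seg_pos a b p2 p4 x s2 s4 hx24])
    | (split_ifs <;> (try norm_num) <;> (exfalso; nlinarith))
end
end

section
/- For a set P of 2n points in convex position in the plane and a perfect matching M on P given by n straight-line segments, any sequence of flips (each flip replacing a pair of crossing segments by a pair of non-crossing ones on the same four endpoints, preserving a perfect matching) has length at most n(n-1)/2. -/
open scoped Classical

noncomputable section

lemma sideVal_comb (p q u v : Pl) (s : ℝ) :
    sideVal p q ((1-s)•u + s•v) = (1-s)*sideVal p q u + s*sideVal p q v := by
  simp [sideVal, Prod.smul_fst, Prod.smul_snd, smul_eq_mul]; ring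

lemma sideVal_base_left (p q : Pl) : sideVal p q p = 0 := by simp [sideVal]

lemma sideVal_base_right (p q : Pl) : sideVal p q q = 0 := by simp [sideVal]; ring

lemma sideVal_zero_on_segment {p q y : Pl} (hy : y ∈ segment ℝ p q) :
    sideVal p q y = 0 := by
  rw [segment_eq_image] at hy
  obtain ⟨t, _, rfl⟩ := hy
  rw [sideVal_comb, sideVal_base_left, sideVal_base_right]; ring

lemma exists_param {p q x : Pl} (hpq : p ≠ q) (h : sideVal p q x = 0) :
    ∃ t : ℝ, x = (1-t)•p + t•q := by
  by_cases h1 : q.1 - p.1 ≠ 0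
  · refine ⟨(x.1 - p.1)/(q.1 - p.1), ?_⟩
    have h2 : x.2 - p.2 = ((x.1 - p.1)/(q.1 - p.1)) * (q.2 - p.2) := by
      field_simp
      unfold sideVal at h
      nlinarith [h]
    ext
    · simp [Prod.smul_fst, smul_eq_mul]; field_simp; ring
    · simp [Prod.smul_snd, smul_eq_mul]
      have := h2
      nlinarith [this]
  · push_neg at h1
    have h1' : q.1 = p.1 := by linarith [sub_eq_zero.mp h1]
    have h2 : q.2 - p.2 ≠ 0 := by
      intro hc
      apply hpq
      ext
      · exact h1'.symm
      · linarith [sub_eq_zero.mp hc]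
    refine ⟨(x.2 - p.2)/(q.2 - p.2), ?_⟩
    have h3 : x.1 = p.1 := by
      unfold sideVal at h
      have hz : (q.2 - p.2) * (x.1 - p.1) = 0 := by rw [h1'] at h; linarith
      rcases mul_eq_zero.mp hz with h | h
      · exact absurd h h2
      · linarith [sub_eq_zero.mp h]
    ext
    · simp [Prod.smul_fst, smul_eq_mul, h3, h1']; ring
    · simp [Prod.smul_snd, smul_eq_mul]; field_simp; ring

lemma collinear_of_sideVal {p q x : Pl} (hpq : p ≠ q) (h : sideVal p q x = 0) :
    Collinear ℝ ({p, q, x} : Set Pl) := by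
  obtain ⟨t, rfl⟩ := exists_param hpq h
  rw [collinear_iff_exists_forall_eq_smul_vadd]
  refine ⟨p, q - p, ?_⟩
  rintro z (rfl | rfl | rfl)
  · exact ⟨0, by ext <;> simp⟩
  · exact ⟨1, by ext <;> simp⟩
  · refine ⟨t, ?_⟩
    ext <;> simp [Prod.smul_fst, Prod.smul_snd, smul_eq_mul] <;> ring

lemma cross_symm {s t : Seg} (h : Cross s t) : Cross t s := by
  obtain ⟨x, hset, h1, h2, h3, h4⟩ := h
  exact ⟨x, by rw [Set.inter_comm]; exact hset, h3, h4, h1, h2⟩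

lemma cross_swap {s : Seg} {u v : Pl} (h : Cross s (u, v)) : Cross s (v, u) := by
  obtain ⟨x, hset, h1, h2, h3, h4⟩ := h
  refine ⟨x, ?_, h1, h2, h4, h3⟩
  rw [← hset]
  unfold segSet
  simp [segment_symm]

lemma cross_irrefl (s : Seg) : ¬ Cross s s := by
  rintro ⟨x, hset, h1, -, -, -⟩
  apply h1
  have : s.1 ∈ segSet s ∩ segSet s := ⟨left_mem_segment ℝ _ _, left_mem_segment ℝ _ _⟩
  rw [hset] at this
  exact this.symm

lemma cross_ne {s t : Seg} (h : Cross s t) : s ≠ t := by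
  rintro rfl; exact cross_irrefl s h

/-- Forward: a crossing forces opposite sides, and gives a meeting point. -/
lemma cross_fwd {p q u v : Pl} (h : Cross (p, q) (u, v))
    (hu : sideVal p q u ≠ 0) (hv : sideVal p q v ≠ 0) :
    sideVal p q u * sideVal p q v < 0 ∧
      ∃ w, w ∈ segment ℝ p q ∧ w ∈ segment ℝ u v := by
  obtain ⟨x, hset, h1, h2, h3, h4⟩ := h
  have hx : x ∈ segment ℝ p q ∩ segment ℝ u v := by
    rw [show segment ℝ p q ∩ segment ℝ u v = segSet (p,q) ∩ segSet (u,v) from rfl, hset]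
    rfl
  obtain ⟨hxpq, hxuv⟩ := hx
  refine ⟨?_, x, hxpq, hxuv⟩
  have hfx : sideVal p q x = 0 := sideVal_zero_on_segment hxpq
  rw [segment_eq_image] at hxuv
  obtain ⟨s, ⟨hs0, hs1⟩, hxe⟩ := hxuv
  simp only at hxe
  have hcomb : (1-s) * sideVal p q u + s * sideVal p q v = 0 := by
    rw [← sideVal_comb, hxe, hfx]
  have hs0' : s ≠ 0 := by rintro rfl; apply h3; rw [← hxe]; ext <;> simp
  have hs1' : s ≠ 1 := by rintro rfl; apply h4; rw [← hxe]; ext <;> simp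
  have hs0'' : 0 < s := lt_of_le_of_ne hs0 (Ne.symm hs0')
  have hs1'' : s < 1 := lt_of_le_of_ne hs1 hs1'
  rcases hu.lt_or_gt with h | h
  · have : 0 < sideVal p q v := by nlinarith
    nlinarith
  · have : sideVal p q v < 0 := by nlinarith
    nlinarith

/-- Algebra on the line through p,q. -/
lemma line_comb (p q : Pl) (t r μ : ℝ) :
    (1-μ)•((1-t)•p + t•q) + μ•((1-r)•p + r•q)
      = (1-((1-μ)*t+μ*r))•p + ((1-μ)*t+μ*r)•q := by
  ext <;> simp [Prod.smul_fst, Prod.smul_snd, smul_eq_mul] <;> ring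
/-- Backward: opposite sides + meeting of the segment with a convex set containing
u, v but not p, q gives a crossing. -/
lemma cross_bwd {p q u v : Pl} {K : Set Pl} (hK : Convex ℝ K)
    (huK : u ∈ K) (hvK : v ∈ K) (hpK : p ∉ K) (hqK : q ∉ K) (hpq : p ≠ q)
    (hprod : sideVal p q u * sideVal p q v < 0)
    (hmeet : ∃ w, w ∈ segment ℝ p q ∧ w ∈ K) :
    Cross (p, q) (u, v) := by
  obtain ⟨α, hα⟩ : ∃ α, sideVal p q u = α := ⟨_, rfl⟩
  obtain ⟨β, hβ⟩ : ∃ β, sideVal p q v = β := ⟨_, rfl⟩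
  rw [hα, hβ] at hprod
  have hαβ : α - β ≠ 0 := by
    intro hc
    have hβα : β = α := by linarith
    rw [hβα] at hprod
    nlinarith [sq_nonneg α]
  obtain ⟨s, hsdef⟩ : ∃ s : ℝ, s = α / (α - β) := ⟨_, rfl⟩
  have hcomb : (1-s) * α + s * β = 0 := by
    rw [hsdef]; field_simp; ring
  have hsigns : (α < 0 ∧ 0 < β) ∨ (0 < α ∧ β < 0) := by
    rcases lt_or_gt_of_ne (fun hc : α = 0 => by
      rw [hc, zero_mul] at hprod; exact lt_irrefl 0 hprod : α ≠ 0) with h | h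
    · left; exact ⟨h, by nlinarith⟩
    · right; exact ⟨h, by nlinarith⟩
  have hs0 : 0 < s := by rcases hsigns with ⟨h1, h2⟩ | ⟨h1, h2⟩ <;> nlinarith
  have hs1 : s < 1 := by rcases hsigns with ⟨h1, h2⟩ | ⟨h1, h2⟩ <;> nlinarith
  obtain ⟨x, hxdef⟩ : ∃ x : Pl, x = (1-s)•u + s•v := ⟨_, rfl⟩
  have hxuv : x ∈ segment ℝ u v := by
    rw [segment_eq_image]; exact ⟨s, ⟨hs0.le, hs1.le⟩, hxdef.symm⟩
  have hxK : x ∈ K := hK.segment_subset huK hvK hxuv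
  have hfx : sideVal p q x = 0 := by rw [hxdef, sideVal_comb, hα, hβ]; exact hcomb
  obtain ⟨t, hxt⟩ := exists_param hpq hfx
  obtain ⟨w, hwpq, hwK⟩ := hmeet
  have hfw : sideVal p q w = 0 := sideVal_zero_on_segment hwpq
  obtain ⟨r, hwr⟩ := exists_param hpq hfw
  have hr0 : 0 ≤ r ∧ r ≤ 1 := by
    rw [segment_eq_image] at hwpq
    obtain ⟨r', hr', hwe⟩ := hwpq
    simp only at hwe
    have : r' = r := by
      by_contra hne
      have heq : ((1:ℝ)-r')•p + r'•q = (1-r)•p + r•q := by rw [hwe, hwr]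
      have hcomp : (1-r')*p.1 + r'*q.1 = (1-r)*p.1 + r*q.1 ∧
          (1-r')*p.2 + r'*q.2 = (1-r)*p.2 + r*q.2 := by
        constructor
        · have := congrArg Prod.fst heq
          simpa [Prod.smul_fst, smul_eq_mul] using this
        · have := congrArg Prod.snd heq
          simpa [Prod.smul_snd, smul_eq_mul] using this
      apply hpq
      have h1 : (r'-r)*(q.1-p.1) = 0 := by nlinarith [hcomp.1]
      have h2 : (r'-r)*(q.2-p.2) = 0 := by nlinarith [hcomp.2]
      have hrr : r' - r ≠ 0 := sub_ne_zero.mpr hne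
      ext
      · rcases mul_eq_zero.mp h1 with h | h
        · exact absurd h hrr
        · linarith [sub_eq_zero.mp h]
      · rcases mul_eq_zero.mp h2 with h | h
        · exact absurd h hrr
        · linarith [sub_eq_zero.mp h]
    rw [← this]; exact hr'
  have ht0 : 0 ≤ t := by
    by_contra hlt
    push_neg at hlt
    apply hpK
    have hrt : 0 < r - t := by linarith [hr0.1]
    obtain ⟨μ, hμdef⟩ : ∃ μ : ℝ, μ = -t / (r - t) := ⟨_, rfl⟩
    have hμ0 : 0 ≤ μ := by rw [hμdef]; exact div_nonneg (by linarith) hrt.le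
    have hμ1 : μ ≤ 1 := by rw [hμdef, div_le_one hrt]; linarith [hr0.1]
    have hcoef : (1-μ)*t + μ*r = 0 := by rw [hμdef]; field_simp; ring
    have heq : (1-μ)•x + μ•w = p := by
      rw [hxt, hwr, line_comb, hcoef]; ext <;> simp
    rw [← heq]
    exact hK.segment_subset hxK hwK (by rw [segment_eq_image]; exact ⟨μ, ⟨hμ0, hμ1⟩, rfl⟩)
  have ht1 : t ≤ 1 := by
    by_contra hlt
    push_neg at hlt
    apply hqK
    have hrt : 0 < t - r := by linarith [hr0.2]
    obtain ⟨μ, hμdef⟩ : ∃ μ : ℝ, μ = (1 - r) / (t - r) := ⟨_, rfl⟩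
    have hμ0 : 0 ≤ μ := by rw [hμdef]; exact div_nonneg (by linarith [hr0.2]) hrt.le
    have hμ1 : μ ≤ 1 := by rw [hμdef, div_le_one hrt]; linarith
    have hcoef : (1-μ)*r + μ*t = 1 := by rw [hμdef]; field_simp; ring
    have heq : (1-μ)•w + μ•x = q := by
      rw [hxt, hwr, line_comb, hcoef]; ext <;> simp
    rw [← heq]
    exact hK.segment_subset hwK hxK (by rw [segment_eq_image]; exact ⟨μ, ⟨hμ0, hμ1⟩, rfl⟩)
  have hxpq : x ∈ segment ℝ p q := by
    rw [segment_eq_image]; exact ⟨t, ⟨ht0, ht1⟩, hxt.symm⟩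
  refine ⟨x, ?_, ?_, ?_, ?_, ?_⟩
  · apply Set.eq_singleton_iff_unique_mem.mpr
    constructor
    · exact ⟨hxpq, hxuv⟩
    rintro y ⟨hypq, hyuv⟩
    have hypq' : y ∈ segment ℝ p q := hypq
    have hyuv' : y ∈ segment ℝ u v := hyuv
    have hfy : sideVal p q y = 0 := sideVal_zero_on_segment hypq'
    rw [segment_eq_image] at hyuv'
    obtain ⟨s', hs', hye⟩ := hyuv'
    simp only at hye
    have hcomb' : (1-s') * α + s' * β = 0 := by
      rw [← hα, ← hβ, ← sideVal_comb, hye, hfy]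
    have hss : s' = s := by
      have h1 : (s' - s) * (β - α) = 0 := by nlinarith
      rcases mul_eq_zero.mp h1 with h | h
      · linarith [sub_eq_zero.mp h]
      · exfalso; apply hαβ; linarith [sub_eq_zero.mp h]
    rw [← hye, hss, ← hxdef]
  · rintro rfl; exact hpK hxK
  · rintro rfl; exact hqK hxK
  · intro hc
    have hc2 : x = u := hc
    have hz : α = 0 := by rw [← hα, ← hc2]; exact hfx
    rw [hz, zero_mul] at hprod; exact lt_irrefl 0 hprod
  · intro hc
    have hc2 : x = v := hc
    have hz : β = 0 := by rw [← hβ, ← hc2]; exact hfx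
    rw [hz, mul_zero] at hprod; exact lt_irrefl 0 hprod


lemma gp_side {S : Set Pl} (hgp : GenPos S) {p q z : Pl} (hp : p ∈ S) (hq : q ∈ S)
    (hz : z ∈ S) (hpq : p ≠ q) (hpz : p ≠ z) (hqz : q ≠ z) : sideVal p q z ≠ 0 :=
  fun h => hgp p hp q hq z hz hpq hpz hqz (collinear_of_sideVal hpq h)

lemma comb_neg {x y s : ℝ} (hx : x < 0) (hy : y < 0) (h0 : 0 ≤ s) (h1 : s ≤ 1) :
    (1-s)*x + s*y < 0 := by
  rcases lt_or_ge s 1 with h | h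
  · nlinarith
  · have hs : s = 1 := le_antisymm h1 h
    rw [hs]; linarith

lemma comb_pos {x y s : ℝ} (hx : 0 < x) (hy : 0 < y) (h0 : 0 ≤ s) (h1 : s ≤ 1) :
    0 < (1-s)*x + s*y := by
  rcases lt_or_ge s 1 with h | h
  · nlinarith
  · have hs : s = 1 := le_antisymm h1 h
    rw [hs]; linarith

lemma core {S : Set Pl} (hconv : ConvexPos S) (hgp : GenPos S)
    {a b c d p q : Pl} (haS : a ∈ S) (hbS : b ∈ S) (hcS : c ∈ S) (hdS : d ∈ S)
    (hpS : p ∈ S) (hqS : q ∈ S)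
    (hab : a ≠ b) (hac : a ≠ c) (had : a ≠ d) (hbc : b ≠ c) (hbd : b ≠ d) (hcd : c ≠ d)
    (hpq : p ≠ q)
    (hpa : p ≠ a) (hpb : p ≠ b) (hpc : p ≠ c) (hpd : p ≠ d)
    (hqa : q ≠ a) (hqb : q ≠ b) (hqc : q ≠ c) (hqd : q ≠ d)
    (hX : Cross (a, c) (b, d)) :
    (Cross (p,q) (a,d) → ¬ Cross (p,q) (a,c) → Cross (p,q) (b,d)) ∧
    (Cross (p,q) (b,c) → ¬ Cross (p,q) (b,d) → Cross (p,q) (a,c)) ∧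
    (Cross (p,q) (a,d) → Cross (p,q) (b,c) → Cross (p,q) (a,c) ∧ Cross (p,q) (b,d)) := by
  have hεa := gp_side hgp hpS hqS haS hpq hpa hqa
  have hεb := gp_side hgp hpS hqS hbS hpq hpb hqb
  have hεc := gp_side hgp hpS hqS hcS hpq hpc hqc
  have hεd := gp_side hgp hpS hqS hdS hpq hpd hqd
  obtain ⟨εa, hva⟩ : ∃ x, sideVal p q a = x := ⟨_, rfl⟩
  obtain ⟨εb, hvb⟩ : ∃ x, sideVal p q b = x := ⟨_, rfl⟩
  obtain ⟨εc, hvc⟩ : ∃ x, sideVal p q c = x := ⟨_, rfl⟩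
  obtain ⟨εd, hvd⟩ : ∃ x, sideVal p q d = x := ⟨_, rfl⟩
  have hεa0 : εa ≠ 0 := hva ▸ hεa
  have hεb0 : εb ≠ 0 := hvb ▸ hεb
  have hεc0 : εc ≠ 0 := hvc ▸ hεc
  have hεd0 : εd ≠ 0 := hvd ▸ hεd
  set K : Set Pl := convexHull ℝ {a, b, c, d} with hKdef
  have hKconv : Convex ℝ K := convex_convexHull ℝ _
  have haK : a ∈ K := subset_convexHull ℝ _ (by simp)
  have hbK : b ∈ K := subset_convexHull ℝ _ (by simp)
  have hcK : c ∈ K := subset_convexHull ℝ _ (by simp)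
  have hdK : d ∈ K := subset_convexHull ℝ _ (by simp)
  have hout : ∀ z : Pl, z ∈ S → z ≠ a → z ≠ b → z ≠ c → z ≠ d → z ∉ K := by
    intro z hzS hza hzb hzc hzd hzK
    apply hconv z hzS
    apply convexHull_mono (show ({a,b,c,d} : Set Pl) ⊆ S \ {z} by
      rintro y (rfl | rfl | rfl | rfl) <;>
        exact ⟨by assumption, by simp [Ne.symm, *]⟩) hzK
  have hpK : p ∉ K := hout p hpS hpa hpb hpc hpd
  have hqK : q ∉ K := hout q hqS hqa hqb hqc hqd
  -- the exclusion from the crossing of the diagonals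
  have hE : 0 < εa * εc → 0 < εb * εd → 0 < εa * εb := by
    intro h2 h3
    obtain ⟨x0, hset, -, -, -, -⟩ := hX
    have hx0 : x0 ∈ segSet (a, c) ∩ segSet (b, d) := by rw [hset]; rfl
    obtain ⟨hx1, hx2⟩ := hx0
    have hx1' : x0 ∈ segment ℝ a c := hx1
    have hx2' : x0 ∈ segment ℝ b d := hx2
    rw [segment_eq_image] at hx1' hx2'
    obtain ⟨s1, hs1, he1⟩ := hx1'
    obtain ⟨s2, hs2, he2⟩ := hx2'
    simp only at he1 he2
    have hf1 : sideVal p q x0 = (1-s1)*εa + s1*εc := by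
      rw [← he1, sideVal_comb, hva, hvc]
    have hf2 : sideVal p q x0 = (1-s2)*εb + s2*εd := by
      rw [← he2, sideVal_comb, hvb, hvd]
    obtain ⟨hs1a, hs1b⟩ := hs1
    obtain ⟨hs2a, hs2b⟩ := hs2
    rcases hεa0.lt_or_gt with ha | ha
    · have hc' : εc < 0 := by nlinarith
      have hfneg : sideVal p q x0 < 0 := by
        rw [hf1]; exact comb_neg ha hc' hs1a hs1b
      have hb' : εb < 0 := by
        by_contra hb''
        push_neg at hb''
        have hb3 : 0 < εb := lt_of_le_of_ne hb'' (Ne.symm hεb0)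
        have hd3 : 0 < εd := by nlinarith
        rw [hf2] at hfneg
        exact absurd (comb_pos hb3 hd3 hs2a hs2b) (by linarith)
      nlinarith
    · have hc' : 0 < εc := by nlinarith
      have hfpos : 0 < sideVal p q x0 := by
        rw [hf1]; exact comb_pos ha hc' hs1a hs1b
      have hb' : 0 < εb := by
        by_contra hb''
        push_neg at hb''
        have hb3 : εb < 0 := lt_of_le_of_ne hb'' hεb0
        have hd3 : εd < 0 := by nlinarith
        rw [hf2] at hfpos
        exact absurd (comb_neg hb3 hd3 hs2a hs2b) (by linarith)
      nlinarith
  -- crossing iff criteria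
  have fwd : ∀ u v : Pl, sideVal p q u ≠ 0 → sideVal p q v ≠ 0 → u ∈ K → v ∈ K →
      Cross (p,q) (u,v) →
      sideVal p q u * sideVal p q v < 0 ∧ ∃ w, w ∈ segment ℝ p q ∧ w ∈ K := by
    intro u v hu hv huK hvK hcr
    obtain ⟨hlt, w, hw1, hw2⟩ := cross_fwd hcr hu hv
    exact ⟨hlt, w, hw1, hKconv.segment_subset huK hvK hw2⟩
  have bwd : ∀ u v : Pl, u ∈ K → v ∈ K → sideVal p q u * sideVal p q v < 0 →
      (∃ w, w ∈ segment ℝ p q ∧ w ∈ K) → Cross (p,q) (u,v) := by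
    intro u v huK hvK hlt hmeet
    exact cross_bwd hKconv huK hvK hpK hqK hpq hlt hmeet
  have posof : ∀ x y : ℝ, x ≠ 0 → y ≠ 0 → ¬ (x * y < 0) → 0 < x * y := by
    intro x y hx hy h
    rcases (mul_ne_zero hx hy).lt_or_gt with h' | h'
    · exact absurd h' h
    · exact h'
  refine ⟨?_, ?_, ?_⟩
  · -- Cross (p,q) (a,d) → ¬ Cross (p,q) (a,c) → Cross (p,q) (b,d)
    intro h1 h2
    obtain ⟨h1', hmeet⟩ := fwd a d hεa hεd haK hdK h1
    rw [hva, hvd] at h1'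
    have h2' : 0 < εa * εc := by
      apply posof _ _ hεa0 hεc0
      intro hlt
      exact h2 (bwd a c haK hcK (by rw [hva, hvc]; exact hlt) hmeet)
    apply bwd b d hbK hdK ?_ hmeet
    rw [hvb, hvd]
    by_contra hbd'
    have h3' : 0 < εb * εd := posof _ _ hεb0 hεd0 hbd'
    have h4' : 0 < εa * εb := hE h2' h3'
    nlinarith [mul_pos h4' h3', sq_nonneg εb]
  · -- Cross (p,q) (b,c) → ¬ Cross (p,q) (b,d) → Cross (p,q) (a,c)
    intro h1 h2
    obtain ⟨h1', hmeet⟩ := fwd b c hεb hεc hbK hcK h1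
    rw [hvb, hvc] at h1'
    have h2' : 0 < εb * εd := by
      apply posof _ _ hεb0 hεd0
      intro hlt
      exact h2 (bwd b d hbK hdK (by rw [hvb, hvd]; exact hlt) hmeet)
    apply bwd a c haK hcK ?_ hmeet
    rw [hva, hvc]
    by_contra hac'
    have h3' : 0 < εa * εc := posof _ _ hεa0 hεc0 hac'
    have h4' : 0 < εa * εb := hE h3' h2'
    nlinarith [mul_pos h4' h3', sq_nonneg εa]
  · -- both new crossed → both diagonals crossed
    intro h1 h2
    obtain ⟨h1', hmeet⟩ := fwd a d hεa hεd haK hdK h1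
    obtain ⟨h2', -⟩ := fwd b c hεb hεc hbK hcK h2
    rw [hva, hvd] at h1'
    rw [hvb, hvc] at h2'
    have hprod4 : 0 < (εa * εc) * (εb * εd) := by
      have := mul_pos_of_neg_of_neg h1' h2'
      nlinarith
    have hac' : εa * εc < 0 := by
      by_contra hac''
      have h3' : 0 < εa * εc := posof _ _ hεa0 hεc0 hac''
      have hbd' : 0 < εb * εd := by
        by_contra hbd''
        have : εb * εd < 0 := by
          rcases (mul_ne_zero hεb0 hεd0).lt_or_gt with h' | h'
          · exact h'
          · exact absurd h' hbd''
        nlinarith [mul_pos h3' h3']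
      have h4' : 0 < εa * εb := hE h3' hbd'
      nlinarith [mul_pos h4' hbd', sq_nonneg εb]
    have hbd' : εb * εd < 0 := by
      by_contra hbd''
      have h3' : 0 < εb * εd := posof _ _ hεb0 hεd0 hbd''
      nlinarith
    constructor
    · exact bwd a c haK hcK (by rw [hva, hvc]; exact hac') hmeet
    · exact bwd b d hbK hdK (by rw [hvb, hvd]; exact hbd') hmeet

def cPairs (M : Finset Seg) : Finset (Seg × Seg) :=
  (M ×ˢ M).filter (fun z => Cross z.1 z.2)

lemma mem_cPairs {M : Finset Seg} {z : Seg × Seg} :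
    z ∈ cPairs M ↔ z.1 ∈ M ∧ z.2 ∈ M ∧ Cross z.1 z.2 := by
  simp [cPairs, Finset.mem_filter, Finset.mem_product, and_assoc]

lemma step_aux {M M' : Finset Seg} {s1 s2 t1 t2 : Seg}
    (hs1 : s1 ∈ M) (hs2 : s2 ∈ M) (hX : Cross s1 s2)
    (hM' : M' = (M \ {s1, s2}) ∪ {t1, t2})
    (ht12 : ¬ Cross t1 t2)
    (hC1 : ∀ e ∈ M, e ≠ s1 → e ≠ s2 → Cross e t1 → ¬ Cross e s1 → Cross e s2)
    (hC2 : ∀ e ∈ M, e ≠ s1 → e ≠ s2 → Cross e t2 → ¬ Cross e s2 → Cross e s1)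
    (hC3 : ∀ e ∈ M, e ≠ s1 → e ≠ s2 → Cross e t1 → Cross e t2 →
      Cross e s1 ∧ Cross e s2) :
    (cPairs M').card + 2 ≤ (cPairs M).card := by
  classical
  have hs12 : s1 ≠ s2 := cross_ne hX
  -- "old" segments
  have hold : ∀ u, u ∈ M' → u ≠ t1 → u ≠ t2 → u ∈ M ∧ u ≠ s1 ∧ u ≠ s2 := by
    intro u hu h1 h2
    rw [hM', Finset.mem_union, Finset.mem_sdiff] at hu
    rcases hu with ⟨h3, h4⟩ | h3
    · simp only [Finset.mem_insert, Finset.mem_singleton] at h4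
      push_neg at h4
      exact ⟨h3, h4⟩
    · simp only [Finset.mem_insert, Finset.mem_singleton] at h3
      rcases h3 with h | h
      · exact absurd h h1
      · exact absurd h h2
  set g1 : Seg → Seg := fun e => if Cross e s1 then s1 else s2 with hg1
  set g2 : Seg → Seg := fun e => if Cross e s2 then s2 else s1 with hg2
  have g1mem : ∀ e, g1 e ∈ M := by
    intro e; rw [hg1]; dsimp only; split <;> assumption
  have g2mem : ∀ e, g2 e ∈ M := by
    intro e; rw [hg2]; dsimp only; split <;> assumption
  have g1s : ∀ e, g1 e = s1 ∨ g1 e = s2 := by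
    intro e; rw [hg1]; dsimp only; split
    · exact Or.inl rfl
    · exact Or.inr rfl
  have g2s : ∀ e, g2 e = s1 ∨ g2 e = s2 := by
    intro e; rw [hg2]; dsimp only; split
    · exact Or.inr rfl
    · exact Or.inl rfl
  have g1cross : ∀ e ∈ M, e ≠ s1 → e ≠ s2 → Cross e t1 → Cross e (g1 e) := by
    intro e he h1 h2 h3
    rw [hg1]; dsimp only; split
    · assumption
    · exact hC1 e he h1 h2 h3 (by assumption)
  have g2cross : ∀ e ∈ M, e ≠ s1 → e ≠ s2 → Cross e t2 → Cross e (g2 e) := by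
    intro e he h1 h2 h3
    rw [hg2]; dsimp only; split
    · assumption
    · exact hC2 e he h1 h2 h3 (by assumption)
  have gboth : ∀ e ∈ M, e ≠ s1 → e ≠ s2 → Cross e t1 → Cross e t2 →
      g1 e = s1 ∧ g2 e = s2 := by
    intro e he h1 h2 h3 h4
    obtain ⟨hc1, hc2⟩ := hC3 e he h1 h2 h3 h4
    constructor
    · rw [hg1]; dsimp only; rw [if_pos hc1]
    · rw [hg2]; dsimp only; rw [if_pos hc2]
  set F : Seg × Seg → Seg × Seg := fun z =>
    if z.2 = t1 then (z.1, g1 z.1)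
    else if z.2 = t2 then (z.1, g2 z.1)
    else if z.1 = t1 then (g1 z.2, z.2)
    else if z.1 = t2 then (g2 z.2, z.2)
    else z with hF
  set T : Finset (Seg × Seg) := ((cPairs M).erase (s1, s2)).erase (s2, s1) with hT
  -- case analysis record for any element of cPairs M'
  have hcases : ∀ z ∈ cPairs M',
      (z.2 = t1 ∧ z.1 ∈ M ∧ z.1 ≠ s1 ∧ z.1 ≠ s2 ∧ z.1 ≠ t1 ∧ z.1 ≠ t2 ∧ Cross z.1 t1 ∧
        F z = (z.1, g1 z.1)) ∨
      (z.2 ≠ t1 ∧ z.2 = t2 ∧ z.1 ∈ M ∧ z.1 ≠ s1 ∧ z.1 ≠ s2 ∧ z.1 ≠ t1 ∧ z.1 ≠ t2 ∧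
        Cross z.1 t2 ∧ F z = (z.1, g2 z.1)) ∨
      (z.2 ≠ t1 ∧ z.2 ≠ t2 ∧ z.1 = t1 ∧ z.2 ∈ M ∧ z.2 ≠ s1 ∧ z.2 ≠ s2 ∧
        Cross z.2 t1 ∧ F z = (g1 z.2, z.2)) ∨
      (z.2 ≠ t1 ∧ z.2 ≠ t2 ∧ z.1 ≠ t1 ∧ z.1 = t2 ∧ z.2 ∈ M ∧ z.2 ≠ s1 ∧ z.2 ≠ s2 ∧
        Cross z.2 t2 ∧ F z = (g2 z.2, z.2)) ∨
      (z.2 ≠ t1 ∧ z.2 ≠ t2 ∧ z.1 ≠ t1 ∧ z.1 ≠ t2 ∧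
        z.1 ∈ M ∧ z.1 ≠ s1 ∧ z.1 ≠ s2 ∧ z.2 ∈ M ∧ z.2 ≠ s1 ∧ z.2 ≠ s2 ∧ F z = z) := by
    intro z hz
    rw [mem_cPairs] at hz
    obtain ⟨hu, hv, hcr⟩ := hz
    by_cases hv1 : z.2 = t1
    · left
      have hu1 : z.1 ≠ t1 := by
        intro hc; rw [hc, hv1] at hcr; exact cross_irrefl _ hcr
      have hu2 : z.1 ≠ t2 := by
        intro hc; rw [hc, hv1] at hcr; exact ht12 (cross_symm hcr)
      obtain ⟨h5, h6, h7⟩ := hold _ hu hu1 hu2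
      refine ⟨hv1, h5, h6, h7, hu1, hu2, by rw [← hv1]; exact hcr, ?_⟩
      rw [hF]; dsimp only; rw [if_pos hv1]
    by_cases hv2 : z.2 = t2
    · right; left
      have hu1 : z.1 ≠ t1 := by
        intro hc; rw [hc, hv2] at hcr; exact ht12 hcr
      have hu2 : z.1 ≠ t2 := by
        intro hc; rw [hc, hv2] at hcr; exact cross_irrefl _ hcr
      obtain ⟨h5, h6, h7⟩ := hold _ hu hu1 hu2
      refine ⟨hv1, hv2, h5, h6, h7, hu1, hu2, by rw [← hv2]; exact hcr, ?_⟩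
      rw [hF]; dsimp only; rw [if_neg hv1, if_pos hv2]
    by_cases hu1 : z.1 = t1
    · right; right; left
      obtain ⟨h5, h6, h7⟩ := hold _ hv hv1 hv2
      refine ⟨hv1, hv2, hu1, h5, h6, h7, cross_symm (by rw [← hu1]; exact hcr), ?_⟩
      rw [hF]; dsimp only; rw [if_neg hv1, if_neg hv2, if_pos hu1]
    by_cases hu2 : z.1 = t2
    · right; right; right; left
      obtain ⟨h5, h6, h7⟩ := hold _ hv hv1 hv2
      refine ⟨hv1, hv2, hu1, hu2, h5, h6, h7, cross_symm (by rw [← hu2]; exact hcr), ?_⟩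
      rw [hF]; dsimp only; rw [if_neg hv1, if_neg hv2, if_neg hu1, if_pos hu2]
    · right; right; right; right
      obtain ⟨h5, h6, h7⟩ := hold _ hu hu1 hu2
      obtain ⟨h8, h9, h10⟩ := hold _ hv hv1 hv2
      refine ⟨hv1, hv2, hu1, hu2, h5, h6, h7, h8, h9, h10, ?_⟩
      rw [hF]; dsimp only; rw [if_neg hv1, if_neg hv2, if_neg hu1, if_neg hu2]
  have hmap : ∀ z ∈ cPairs M', F z ∈ T := by
    intro z hz
    have hz0 := mem_cPairs.mp hz
    rcases hcases z hz with ⟨hv1, hm, hns1, hns2, hnt1, hnt2, hcr1, hFz⟩ | ⟨hv1, hv2, hm, hns1, hns2, hnt1, hnt2, hcr1, hFz⟩ | ⟨hv1, hv2, hu1, hm, hns1, hns2, hcr1, hFz⟩ | ⟨hv1, hv2, hu1, hu2, hm, hns1, hns2, hcr1, hFz⟩ | ⟨hv1, hv2, hu1, hu2, hm, hns1, hns2, hm2, hns1b, hns2b, hFz⟩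
    · rw [hT, Finset.mem_erase, Finset.mem_erase, hFz]
      refine ⟨fun hc => hns2 (congrArg Prod.fst hc), fun hc => hns1 (congrArg Prod.fst hc), ?_⟩
      exact mem_cPairs.mpr ⟨hm, g1mem _, g1cross z.1 hm hns1 hns2 hcr1⟩
    · rw [hT, Finset.mem_erase, Finset.mem_erase, hFz]
      refine ⟨fun hc => hns2 (congrArg Prod.fst hc), fun hc => hns1 (congrArg Prod.fst hc), ?_⟩
      exact mem_cPairs.mpr ⟨hm, g2mem _, g2cross z.1 hm hns1 hns2 hcr1⟩
    · rw [hT, Finset.mem_erase, Finset.mem_erase, hFz]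
      refine ⟨fun hc => hns1 (congrArg Prod.snd hc), fun hc => hns2 (congrArg Prod.snd hc), ?_⟩
      exact mem_cPairs.mpr ⟨g1mem _, hm, cross_symm (g1cross z.2 hm hns1 hns2 hcr1)⟩
    · rw [hT, Finset.mem_erase, Finset.mem_erase, hFz]
      refine ⟨fun hc => hns1 (congrArg Prod.snd hc), fun hc => hns2 (congrArg Prod.snd hc), ?_⟩
      exact mem_cPairs.mpr ⟨g2mem _, hm, cross_symm (g2cross z.2 hm hns1 hns2 hcr1)⟩
    · rw [hT, Finset.mem_erase, Finset.mem_erase, hFz]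
      refine ⟨fun hc => hns2 (congrArg Prod.fst hc), fun hc => hns1 (congrArg Prod.fst hc), ?_⟩
      exact mem_cPairs.mpr ⟨hm, hm2, hz0.2.2⟩
  have hinj : Set.InjOn F ↑(cPairs M') := by
    intro z hz w hw heq
    rcases hcases z hz with ⟨hv1, hm, hns1, hns2, hnt1, hnt2, hcr1, hFz⟩ | ⟨hv1, hv2, hm, hns1, hns2, hnt1, hnt2, hcr1, hFz⟩ | ⟨hv1, hv2, hu1, hm, hns1, hns2, hcr1, hFz⟩ | ⟨hv1, hv2, hu1, hu2, hm, hns1, hns2, hcr1, hFz⟩ | ⟨hv1, hv2, hu1, hu2, hm, hns1, hns2, hm2, hns1b, hns2b, hFz⟩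
    · rcases hcases w hw with ⟨hv1', hm', hns1', hns2', hnt1', hnt2', hcr1', hFz'⟩ | ⟨hv1', hv2', hm', hns1', hns2', hnt1', hnt2', hcr1', hFz'⟩ | ⟨hv1', hv2', hu1', hm', hns1', hns2', hcr1', hFz'⟩ | ⟨hv1', hv2', hu1', hu2', hm', hns1', hns2', hcr1', hFz'⟩ | ⟨hv1', hv2', hu1', hu2', hm', hns1', hns2', hm2', hns1b', hns2b', hFz'⟩
      · rw [hFz, hFz'] at heq
        injection heq with e1 e2
        exact Prod.ext_iff.mpr ⟨e1, by rw [hv1, hv1']⟩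
      · rw [hFz, hFz'] at heq
        injection heq with e1 e2
        have hcrB : Cross z.1 t2 := by rw [e1]; exact hcr1'
        obtain ⟨ga, gb⟩ := gboth z.1 hm hns1 hns2 hcr1 hcrB
        have hx1 : g2 w.1 = s2 := by rw [← e1]; exact gb
        exact absurd (ga.symm.trans (e2.trans hx1)) hs12
      · rw [hFz, hFz'] at heq
        injection heq with e1 e2
        rcases g1s z.1 with h | h
        · exact absurd (e2.symm.trans h) hns1'
        · exact absurd (e2.symm.trans h) hns2'
      · rw [hFz, hFz'] at heq
        injection heq with e1 e2
        rcases g1s z.1 with h | h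
        · exact absurd (e2.symm.trans h) hns1'
        · exact absurd (e2.symm.trans h) hns2'
      · rw [hFz, hFz'] at heq
        have e2 : g1 z.1 = w.2 := congrArg Prod.snd heq
        rcases g1s z.1 with h | h
        · exact absurd (e2.symm.trans h) hns1b'
        · exact absurd (e2.symm.trans h) hns2b'
    · rcases hcases w hw with ⟨hv1', hm', hns1', hns2', hnt1', hnt2', hcr1', hFz'⟩ | ⟨hv1', hv2', hm', hns1', hns2', hnt1', hnt2', hcr1', hFz'⟩ | ⟨hv1', hv2', hu1', hm', hns1', hns2', hcr1', hFz'⟩ | ⟨hv1', hv2', hu1', hu2', hm', hns1', hns2', hcr1', hFz'⟩ | ⟨hv1', hv2', hu1', hu2', hm', hns1', hns2', hm2', hns1b', hns2b', hFz'⟩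
      · rw [hFz, hFz'] at heq
        injection heq with e1 e2
        have hcrA : Cross z.1 t1 := by rw [e1]; exact hcr1'
        obtain ⟨ga, gb⟩ := gboth z.1 hm hns1 hns2 hcrA hcr1
        have hx1 : g1 w.1 = s1 := by rw [← e1]; exact ga
        exact absurd (gb.symm.trans (e2.trans hx1)) (Ne.symm hs12)
      · rw [hFz, hFz'] at heq
        injection heq with e1 e2
        exact Prod.ext_iff.mpr ⟨e1, by rw [hv2, hv2']⟩
      · rw [hFz, hFz'] at heq
        injection heq with e1 e2
        rcases g2s z.1 with h | h
        · exact absurd (e2.symm.trans h) hns1'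
        · exact absurd (e2.symm.trans h) hns2'
      · rw [hFz, hFz'] at heq
        injection heq with e1 e2
        rcases g2s z.1 with h | h
        · exact absurd (e2.symm.trans h) hns1'
        · exact absurd (e2.symm.trans h) hns2'
      · rw [hFz, hFz'] at heq
        have e2 : g2 z.1 = w.2 := congrArg Prod.snd heq
        rcases g2s z.1 with h | h
        · exact absurd (e2.symm.trans h) hns1b'
        · exact absurd (e2.symm.trans h) hns2b'
    · rcases hcases w hw with ⟨hv1', hm', hns1', hns2', hnt1', hnt2', hcr1', hFz'⟩ | ⟨hv1', hv2', hm', hns1', hns2', hnt1', hnt2', hcr1', hFz'⟩ | ⟨hv1', hv2', hu1', hm', hns1', hns2', hcr1', hFz'⟩ | ⟨hv1', hv2', hu1', hu2', hm', hns1', hns2', hcr1', hFz'⟩ | ⟨hv1', hv2', hu1', hu2', hm', hns1', hns2', hm2', hns1b', hns2b', hFz'⟩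
      · rw [hFz, hFz'] at heq
        injection heq with e1 e2
        rcases g1s w.1 with h | h
        · exact absurd (e2.trans h) hns1
        · exact absurd (e2.trans h) hns2
      · rw [hFz, hFz'] at heq
        injection heq with e1 e2
        rcases g2s w.1 with h | h
        · exact absurd (e2.trans h) hns1
        · exact absurd (e2.trans h) hns2
      · rw [hFz, hFz'] at heq
        injection heq with e1 e2
        exact Prod.ext_iff.mpr ⟨by rw [hu1, hu1'], e2⟩
      · rw [hFz, hFz'] at heq
        injection heq with e1 e2
        have hcrB : Cross z.2 t2 := by rw [e2]; exact hcr1'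
        obtain ⟨ga, gb⟩ := gboth z.2 hm hns1 hns2 hcr1 hcrB
        have hx1 : g2 w.2 = s2 := by rw [← e2]; exact gb
        exact absurd (ga.symm.trans (e1.trans hx1)) hs12
      · rw [hFz, hFz'] at heq
        have e1 : g1 z.2 = w.1 := congrArg Prod.fst heq
        rcases g1s z.2 with h | h
        · exact absurd (e1.symm.trans h) hns1'
        · exact absurd (e1.symm.trans h) hns2'
    · rcases hcases w hw with ⟨hv1', hm', hns1', hns2', hnt1', hnt2', hcr1', hFz'⟩ | ⟨hv1', hv2', hm', hns1', hns2', hnt1', hnt2', hcr1', hFz'⟩ | ⟨hv1', hv2', hu1', hm', hns1', hns2', hcr1', hFz'⟩ | ⟨hv1', hv2', hu1', hu2', hm', hns1', hns2', hcr1', hFz'⟩ | ⟨hv1', hv2', hu1', hu2', hm', hns1', hns2', hm2', hns1b', hns2b', hFz'⟩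
      · rw [hFz, hFz'] at heq
        injection heq with e1 e2
        rcases g1s w.1 with h | h
        · exact absurd (e2.trans h) hns1
        · exact absurd (e2.trans h) hns2
      · rw [hFz, hFz'] at heq
        injection heq with e1 e2
        rcases g2s w.1 with h | h
        · exact absurd (e2.trans h) hns1
        · exact absurd (e2.trans h) hns2
      · rw [hFz, hFz'] at heq
        injection heq with e1 e2
        have hcrA : Cross z.2 t1 := by rw [e2]; exact hcr1'
        obtain ⟨ga, gb⟩ := gboth z.2 hm hns1 hns2 hcrA hcr1
        have hx1 : g1 w.2 = s1 := by rw [← e2]; exact ga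
        exact absurd (gb.symm.trans (e1.trans hx1)) (Ne.symm hs12)
      · rw [hFz, hFz'] at heq
        injection heq with e1 e2
        exact Prod.ext_iff.mpr ⟨by rw [hu2, hu2'], e2⟩
      · rw [hFz, hFz'] at heq
        have e1 : g2 z.2 = w.1 := congrArg Prod.fst heq
        rcases g2s z.2 with h | h
        · exact absurd (e1.symm.trans h) hns1'
        · exact absurd (e1.symm.trans h) hns2'
    · rcases hcases w hw with ⟨hv1', hm', hns1', hns2', hnt1', hnt2', hcr1', hFz'⟩ | ⟨hv1', hv2', hm', hns1', hns2', hnt1', hnt2', hcr1', hFz'⟩ | ⟨hv1', hv2', hu1', hm', hns1', hns2', hcr1', hFz'⟩ | ⟨hv1', hv2', hu1', hu2', hm', hns1', hns2', hcr1', hFz'⟩ | ⟨hv1', hv2', hu1', hu2', hm', hns1', hns2', hm2', hns1b', hns2b', hFz'⟩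
      · rw [hFz, hFz'] at heq
        have e2 : z.2 = g1 w.1 := congrArg Prod.snd heq
        rcases g1s w.1 with h | h
        · exact absurd (e2.trans h) hns1b
        · exact absurd (e2.trans h) hns2b
      · rw [hFz, hFz'] at heq
        have e2 : z.2 = g2 w.1 := congrArg Prod.snd heq
        rcases g2s w.1 with h | h
        · exact absurd (e2.trans h) hns1b
        · exact absurd (e2.trans h) hns2b
      · rw [hFz, hFz'] at heq
        have e1 : z.1 = g1 w.2 := congrArg Prod.fst heq
        rcases g1s w.2 with h | h
        · exact absurd (e1.trans h) hns1
        · exact absurd (e1.trans h) hns2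
      · rw [hFz, hFz'] at heq
        have e1 : z.1 = g2 w.2 := congrArg Prod.fst heq
        rcases g2s w.2 with h | h
        · exact absurd (e1.trans h) hns1
        · exact absurd (e1.trans h) hns2
      · rw [hFz, hFz'] at heq
        exact heq
  have hcard : (cPairs M').card ≤ T.card := Finset.card_le_card_of_injOn F hmap hinj
  have hmem1 : (s1, s2) ∈ cPairs M := mem_cPairs.mpr ⟨hs1, hs2, hX⟩
  have hmem2 : (s2, s1) ∈ cPairs M := mem_cPairs.mpr ⟨hs2, hs1, cross_symm hX⟩
  have hmem2' : (s2, s1) ∈ (cPairs M).erase (s1, s2) :=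
    Finset.mem_erase.mpr ⟨fun hc => hs12 (congrArg Prod.snd hc), hmem2⟩
  have hTcard : T.card = (cPairs M).card - 2 := by
    rw [hT, Finset.card_erase_of_mem hmem2', Finset.card_erase_of_mem hmem1]
    omega
  have h2le : 2 ≤ (cPairs M).card := by
    have hsub : ({(s1, s2), (s2, s1)} : Finset (Seg × Seg)) ⊆ cPairs M := by
      intro x hx
      simp only [Finset.mem_insert, Finset.mem_singleton] at hx
      rcases hx with rfl | rfl
      · exact hmem1
      · exact hmem2
    have := Finset.card_le_card hsub
    rwa [Finset.card_insert_of_notMem (by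
      simp only [Finset.mem_singleton]
      exact fun hc => hs12 (congrArg Prod.snd hc).symm), Finset.card_singleton] at this
  omega



lemma disj_ne {s t : Seg} (h : ({s.1, s.2} : Set Pl) ∩ {t.1, t.2} = ∅) :
    s.1 ≠ t.1 ∧ s.1 ≠ t.2 ∧ s.2 ≠ t.1 ∧ s.2 ≠ t.2 := by
  rw [Set.eq_empty_iff_forall_notMem] at h
  refine ⟨?_, ?_, ?_, ?_⟩ <;> intro hc
  · exact h s.1 ⟨by simp, by simp [hc]⟩
  · exact h s.1 ⟨by simp, by simp [hc]⟩
  · exact h s.2 ⟨by simp, by simp [hc]⟩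
  · exact h s.2 ⟨by simp, by simp [hc]⟩

lemma flip_dec {P : Finset Pl} {M M' : Finset Seg}
    (hconv : ConvexPos (P : Set Pl)) (hgp : GenPos (P : Set Pl))
    (hpm : IsPM P M) (hf : IsFlip M M') :
    (cPairs M').card + 2 ≤ (cPairs M).card := by
  obtain ⟨p1, p2, p3, p4, hX, h13, h24, hcase⟩ := hf
  obtain ⟨⟨hnd, hdisj⟩, hPm, -⟩ := hpm
  have h13ne : p1 ≠ p3 := hnd _ h13
  have h24ne : p2 ≠ p4 := hnd _ h24
  have hsne : ((p1, p3) : Seg) ≠ (p2, p4) := cross_ne hX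
  obtain ⟨h12, h14, h32, h34⟩ := disj_ne (hdisj _ h13 _ h24 hsne)
  have h1P : p1 ∈ (P : Set Pl) := (hPm _ h13).1
  have h3P : p3 ∈ (P : Set Pl) := (hPm _ h13).2
  have h2P : p2 ∈ (P : Set Pl) := (hPm _ h24).1
  have h4P : p4 ∈ (P : Set Pl) := (hPm _ h24).2
  -- common facts for any other segment e of M
  have hfacts : ∀ e ∈ M, e ≠ (p1, p3) → e ≠ (p2, p4) →
      e.1 ∈ (P : Set Pl) ∧ e.2 ∈ (P : Set Pl) ∧ e.1 ≠ e.2 ∧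
      e.1 ≠ p1 ∧ e.1 ≠ p2 ∧ e.1 ≠ p3 ∧ e.1 ≠ p4 ∧
      e.2 ≠ p1 ∧ e.2 ≠ p2 ∧ e.2 ≠ p3 ∧ e.2 ≠ p4 := by
    intro e he hne1 hne2
    obtain ⟨ha1, ha3, hb1, hb3⟩ := disj_ne (hdisj _ he _ h13 hne1)
    obtain ⟨ha2, ha4, hb2, hb4⟩ := disj_ne (hdisj _ he _ h24 hne2)
    exact ⟨(hPm _ he).1, (hPm _ he).2, hnd _ he,
      ha1, ha2, ha3, ha4, hb1, hb2, hb3, hb4⟩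
  have hcore1 : ∀ e ∈ M, e ≠ (p1, p3) → e ≠ (p2, p4) →
      (Cross e (p1,p4) → ¬ Cross e (p1,p3) → Cross e (p2,p4)) ∧
      (Cross e (p2,p3) → ¬ Cross e (p2,p4) → Cross e (p1,p3)) ∧
      (Cross e (p1,p4) → Cross e (p2,p3) → Cross e (p1,p3) ∧ Cross e (p2,p4)) := by
    intro e he hne1 hne2
    obtain ⟨he1, he2, hee, ha1, ha2, ha3, ha4, hb1, hb2, hb3, hb4⟩ :=
      hfacts e he hne1 hne2
    exact core hconv hgp h1P h2P h3P h4P he1 he2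
      h12 h13ne h14 h32.symm h24ne h34 hee
      ha1 ha2 ha3 ha4 hb1 hb2 hb3 hb4 hX
  have hcore2 : ∀ e ∈ M, e ≠ (p1, p3) → e ≠ (p2, p4) →
      (Cross e (p1,p2) → ¬ Cross e (p1,p3) → Cross e (p4,p2)) ∧
      (Cross e (p4,p3) → ¬ Cross e (p4,p2) → Cross e (p1,p3)) ∧
      (Cross e (p1,p2) → Cross e (p4,p3) → Cross e (p1,p3) ∧ Cross e (p4,p2)) := by
    intro e he hne1 hne2
    obtain ⟨he1, he2, hee, ha1, ha2, ha3, ha4, hb1, hb2, hb3, hb4⟩ :=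
      hfacts e he hne1 hne2
    exact core hconv hgp h1P h4P h3P h2P he1 he2
      h14 h13ne h12 h34.symm (Ne.symm h24ne) h32 hee
      ha1 ha4 ha3 ha2 hb1 hb4 hb3 hb2 (cross_swap hX)
  rcases hcase with ⟨ht12, hM'⟩ | ⟨ht12, hM'⟩
  · exact step_aux h13 h24 hX hM' ht12
      (fun e he u1 u2 => (hcore1 e he u1 u2).1)
      (fun e he u1 u2 => (hcore1 e he u1 u2).2.1)
      (fun e he u1 u2 => (hcore1 e he u1 u2).2.2)
  · refine step_aux h13 h24 hX hM' ht12 ?_ ?_ ?_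
    · intro e he u1 u2 hc1 hc2
      exact cross_swap ((hcore2 e he u1 u2).1 hc1 hc2)
    · intro e he u1 u2 hc1 hc2
      exact (hcore2 e he u1 u2).2.1 (cross_swap hc1) (fun hc => hc2 (cross_swap hc))
    · intro e he u1 u2 hc1 hc2
      obtain ⟨hr1, hr2⟩ := (hcore2 e he u1 u2).2.2 hc1 (cross_swap hc2)
      exact ⟨hr1, cross_swap hr2⟩


/-- for `2n` points in convex position, any flip sequence of perfect
matchings has length at most `n(n-1)/2`. -/
theorem stmt5 (n m : ℕ) (P : Finset Pl) (hP : P.card = 2 * n)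
    (hconv : ConvexPos (P : Set Pl)) (hgp : GenPos (P : Set Pl))
    (M : Fin (m + 1) → Finset Seg)
    (hpm : ∀ i, IsPM P (M i) ∧ (M i).card = n)
    (hflip : ∀ i : Fin m, IsFlip (M i.castSucc) (M i.succ)) :
    m ≤ n * (n - 1) / 2 := by
  have hdec : ∀ i : Fin m,
      (cPairs (M i.succ)).card + 2 ≤ (cPairs (M i.castSucc)).card :=
    fun i => flip_dec hconv hgp (hpm i.castSucc).1 (hflip i)
  have hbound : (cPairs (M 0)).card ≤ n * (n - 1) := by
    have hsub : cPairs (M 0) ⊆ (M 0).offDiag := by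
      intro z hz
      rw [mem_cPairs] at hz
      rw [Finset.mem_offDiag]
      exact ⟨hz.1, hz.2.1, cross_ne hz.2.2⟩
    have h1 := Finset.card_le_card hsub
    rw [Finset.offDiag_card, (hpm 0).2] at h1
    rcases n with _ | k
    · simpa using h1
    · have h2 : (k+1)*(k+1) = (k+1)*k + (k+1) := by ring
      have h3 : (k+1) * (k+1-1) = (k+1) * k := by simp
      omega
  have hchain : ∀ k : ℕ, ∀ hk : k ≤ m,
      2 * k + (cPairs (M ⟨k, Nat.lt_succ_of_le hk⟩)).card ≤ (cPairs (M 0)).card := by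
    intro k
    induction k with
    | zero =>
      intro hk
      have : (⟨0, Nat.lt_succ_of_le hk⟩ : Fin (m+1)) = 0 := rfl
      rw [this]
      omega
    | succ j ih =>
      intro hk
      have hjm : j < m := hk
      have hstep := hdec ⟨j, hjm⟩
      have hj := ih (Nat.le_of_lt hjm)
      have e1 : (Fin.castSucc ⟨j, hjm⟩ : Fin (m+1)) = ⟨j, Nat.lt_succ_of_le (Nat.le_of_lt hjm)⟩ := rfl
      have e2 : (Fin.succ ⟨j, hjm⟩ : Fin (m+1)) = ⟨j+1, Nat.lt_succ_of_le hk⟩ := rfl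
      rw [e1, e2] at hstep
      omega
  have hfin := hchain m (le_refl m)
  have h2m : 2 * m ≤ n * (n - 1) := by omega
  rw [Nat.le_div_iff_mul_le (by norm_num : 0 < 2)]
  omega
end
end
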